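/- For all τ ∈ ℍ and all z = (z₁,…,z₈) ∈ ℂ⁸ one has 16·η(τ)^{12}·∏_{j=1}^{8} ϑ11(2τ, 2z_j) = ϑ10(τ,0)⁴·∏_{j=1}^{8} (ϑ10(τ,z_j)·ϑ11(τ,z_j)). Equivalently, wherever ∏_{j=1}^{8} ϑ11(τ,z_j) ≠ 0, the Ramond character of the holomorphic super vertex operator algebra F₂₄ with N = 1 structure 𝔤 = A_{1,2}^8 satisfies χ_R(τ,z) = 2^{rk(𝔤)/2}·ϑ_𝔤(2τ,2z)/ϑ_𝔤(τ,z) = η(τ)^{−12}·ϑ10(τ,0)⁴·∏_{j=1}^{8} ϑ10(τ,z_j), where ϑ_𝔤(τ,z) := ∏_{j=1}^{8} ϑ11(τ,z_j) is the denominator of the affine Lie algebra of type A_{1,2}^8 and rk(𝔤) = 8. -/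

import Mathlib

open Complex

/-- `ee w = exp(2πiw)`; thus `q^r = ee (r·τ)` and `ζ^r = ee (r·u)`. -/
noncomputable def ee (w : ℂ) : ℂ := Complex.exp (2 * Real.pi * Complex.I * w)

/-- The Dedekind eta function `η(τ) = q^{1/24} ∏_{n≥1} (1 − qⁿ)`. -/
noncomputable def dedekindEta (τ : UpperHalfPlane) : ℂ :=
  ee ((τ : ℂ) / 24) * ∏' n : ℕ, (1 - ee (((n : ℂ) + 1) * (τ : ℂ)))

/-- `ϑ11(τ,u) = −q^{1/8} ζ^{−1/2} ∏_{n≥1} (1−q^{n−1}ζ)(1−qⁿζ^{−1})(1−qⁿ)`. -/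
noncomputable def th11 (τ : UpperHalfPlane) (u : ℂ) : ℂ :=
  -(ee ((τ : ℂ) / 8) * ee (-u / 2)) *
    ∏' n : ℕ, ((1 - ee ((n : ℂ) * (τ : ℂ)) * ee u) *
      (1 - ee (((n : ℂ) + 1) * (τ : ℂ)) * ee (-u)) * (1 - ee (((n : ℂ) + 1) * (τ : ℂ))))

/-- `ϑ10(τ,u) = q^{1/8}(ζ^{1/2}+ζ^{−1/2}) ∏_{n≥1} (1−qⁿ)(1+qⁿζ)(1+qⁿζ^{−1})`. -/
noncomputable def th10 (τ : UpperHalfPlane) (u : ℂ) : ℂ :=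
  ee ((τ : ℂ) / 8) * (ee (u / 2) + ee (-u / 2)) *
    ∏' n : ℕ, ((1 - ee (((n : ℂ) + 1) * (τ : ℂ))) *
      (1 + ee (((n : ℂ) + 1) * (τ : ℂ)) * ee u) * (1 + ee (((n : ℂ) + 1) * (τ : ℂ)) * ee (-u)))

/-- `2τ` as a point of the upper half-plane. -/
noncomputable def dblH (τ : UpperHalfPlane) : UpperHalfPlane :=
  ⟨2 * (τ : ℂ), by
    have h := τ.im_pos
    rw [Complex.mul_im]
    simp [UpperHalfPlane.coe_im]
    linarith⟩

lemma ee_add (a b : ℂ) : ee (a + b) = ee a * ee b := by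
  simp [ee, mul_add, Complex.exp_add]

lemma ee_neg (a : ℂ) : ee (-a) = (ee a)⁻¹ := by
  rw [ee, ee, ← Complex.exp_neg]; ring_nf

lemma ee_zero : ee 0 = 1 := by simp [ee]

lemma ee_ne_zero (a : ℂ) : ee a ≠ 0 := Complex.exp_ne_zero _

lemma ee_nat_mul (n : ℕ) (a : ℂ) : ee ((n : ℂ) * a) = ee a ^ n := by
  rw [ee, ee, ← Complex.exp_nat_mul]; ring_nf

lemma ee_pow (n : ℕ) (a : ℂ) : ee a ^ n = ee ((n : ℂ) * a) := (ee_nat_mul n a).symm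

lemma norm_ee_lt_one (τ : UpperHalfPlane) : ‖ee (τ : ℂ)‖ < 1 := by
  have him := τ.im_pos
  rw [ee, Complex.norm_exp]
  rw [Real.exp_lt_one_iff]
  have : (2 * (Real.pi : ℂ) * Complex.I * (τ : ℂ)).re = -(2 * Real.pi * τ.im) := by
    simp [Complex.mul_re, Complex.mul_im, UpperHalfPlane.coe_im]
  rw [this]
  have := Real.pi_pos
  nlinarith [him]

/-- `FF q c = ∏_{n≥1} (1 + c qⁿ)`. -/
noncomputable def FF (q c : ℂ) : ℂ := ∏' n : ℕ, (1 + c * q ^ (n + 1))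

lemma summable_log_aux {q : ℂ} (hq : ‖q‖ < 1) (c : ℂ) :
    Summable fun n : ℕ => Complex.log (1 + c * q ^ (n + 1)) := by
  have hgeo : Summable fun n : ℕ => (3 / 2 : ℝ) * (‖c‖ * ‖q‖ ^ (n + 1)) := by
    have : Summable fun n : ℕ => ‖q‖ ^ n :=
      summable_geometric_of_lt_one (norm_nonneg q) hq
    simpa [pow_succ, mul_comm, mul_assoc, mul_left_comm] using (this.mul_left ((3/2) * (‖c‖ * ‖q‖)))
  refine Summable.of_norm_bounded_eventually_nat hgeo ?_
  have htend : Filter.Tendsto (fun n : ℕ => ‖c * q ^ (n + 1)‖) Filter.atTop (nhds 0) := by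
    have h0 : Filter.Tendsto (fun n : ℕ => ‖q‖ ^ n) Filter.atTop (nhds 0) :=
      tendsto_pow_atTop_nhds_zero_of_lt_one (norm_nonneg q) hq
    have : (fun n : ℕ => ‖c * q ^ (n + 1)‖) = fun n => (‖c‖ * ‖q‖) * ‖q‖ ^ n := by
      funext n; simp [norm_mul, norm_pow, pow_succ]; ring
    rw [this]
    simpa using h0.const_mul (‖c‖ * ‖q‖)
  filter_upwards [htend.eventually_le_const (show (0:ℝ) < 1/2 by norm_num)] with n hn
  calc ‖Complex.log (1 + c * q ^ (n + 1))‖ ≤ 3/2 * ‖c * q ^ (n+1)‖ :=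
        Complex.norm_log_one_add_half_le_self hn
    _ = 3/2 * (‖c‖ * ‖q‖ ^ (n+1)) := by simp [norm_mul, norm_pow]

lemma hasProd_zero_of_eq_zero {f : ℕ → ℂ} {n : ℕ} (hn : f n = 0) : HasProd f 0 := by
  have : ∀ᶠ s : Finset ℕ in Filter.atTop, ∏ i ∈ s, f i = 0 := by
    filter_upwards [Filter.eventually_ge_atTop ({n} : Finset ℕ)] with s hs
    exact Finset.prod_eq_zero (hs (Finset.mem_singleton_self n)) hn
  exact Filter.Tendsto.congr' (Filter.EventuallyEq.symm this) tendsto_const_nhds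

lemma multF {q : ℂ} (hq : ‖q‖ < 1) (c : ℂ) :
    Multipliable fun n : ℕ => 1 + c * q ^ (n + 1) := by
  by_cases h : ∀ n : ℕ, 1 + c * q ^ (n + 1) ≠ 0
  · exact Complex.multipliable_of_summable_log (summable_log_aux hq c)
  · push_neg at h
    obtain ⟨n, hn⟩ := h
    exact ⟨0, hasProd_zero_of_eq_zero hn⟩

lemma FF_ne_zero {q : ℂ} (hq : ‖q‖ < 1) {c : ℂ} (hc : ∀ n : ℕ, 1 + c * q ^ (n + 1) ≠ 0) :
    FF q c ≠ 0 := by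
  have := Complex.cexp_tsum_eq_tprod (f := fun n : ℕ => 1 + c * q ^ (n + 1))
    (fun n => hc n) (summable_log_aux hq c)
  have h2 : Complex.exp (∑' n : ℕ, Complex.log (1 + c * q ^ (n + 1)))
      = ∏' n : ℕ, (1 + c * q ^ (n + 1)) := this
  rw [FF, ← h2]
  exact Complex.exp_ne_zero _

lemma norm_pow_lt_one {q : ℂ} (hq : ‖q‖ < 1) (n : ℕ) : ‖q ^ (n + 1)‖ < 1 := by
  rw [norm_pow]
  exact pow_lt_one₀ (norm_nonneg q) hq (Nat.succ_ne_zero n)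

lemma one_sub_ne {q : ℂ} (hq : ‖q‖ < 1) (n : ℕ) : 1 + (-1 : ℂ) * q ^ (n + 1) ≠ 0 := by
  intro h
  have h1 : q ^ (n + 1) = 1 := by linear_combination -h
  have h2 := norm_pow_lt_one hq n
  rw [h1] at h2
  simp at h2

lemma FF_neg_one_ne_zero {q : ℂ} (hq : ‖q‖ < 1) : FF q (-1) ≠ 0 :=
  FF_ne_zero hq (one_sub_ne hq)

lemma summable_log_aux0 {q : ℂ} (hq : ‖q‖ < 1) (c : ℂ) :
    Summable fun n : ℕ => Complex.log (1 + c * q ^ n) := by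
  have h := summable_log_aux hq c
  have : Summable fun n : ℕ => Complex.log (1 + c * q ^ (n + 1)) := h
  exact (summable_nat_add_iff 1).1 this

lemma multF0 {q : ℂ} (hq : ‖q‖ < 1) (c : ℂ) :
    Multipliable fun n : ℕ => 1 + c * q ^ n := by
  by_cases h : ∀ n : ℕ, 1 + c * q ^ n ≠ 0
  · exact Complex.multipliable_of_summable_log (summable_log_aux0 hq c)
  · push_neg at h
    obtain ⟨n, hn⟩ := h
    exact ⟨0, hasProd_zero_of_eq_zero hn⟩

lemma tprod_shift {q : ℂ} (hq : ‖q‖ < 1) (c : ℂ) :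
    ∏' n : ℕ, (1 + c * q ^ n) = (1 + c) * FF q c := by
  rw [tprod_eq_zero_mul' (f := fun n : ℕ => 1 + c * q ^ n) (by exact multF hq c)]
  simp [FF]

lemma FF_sq {q : ℂ} (hq : ‖q‖ < 1) (c : ℂ) :
    FF q c * FF q (-c) = FF (q ^ 2) (-(c ^ 2)) := by
  rw [FF, FF, FF, ← Multipliable.tprod_mul (multF hq c) (multF hq (-c))]
  exact tprod_congr fun n => by ring

lemma norm_sq_lt_one {q : ℂ} (hq : ‖q‖ < 1) : ‖q ^ 2‖ < 1 := by
  rw [norm_pow]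
  exact pow_lt_one₀ (norm_nonneg q) hq two_ne_zero

lemma Multipliable.mulq {q : ℂ} (hq : ‖q‖ < 1) (c d : ℂ) :
    Multipliable fun n : ℕ => (1 + c * q ^ (n + 1)) * (1 + d * q ^ (n + 1)) :=
  (multF hq c).mul (multF hq d)

lemma tprod3 {q : ℂ} (hq : ‖q‖ < 1) (c1 c2 c3 : ℂ) :
    ∏' n : ℕ, ((1 + c1 * q ^ n) * ((1 + c2 * q ^ (n + 1)) * (1 + c3 * q ^ (n + 1))))
      = ((1 + c1) * FF q c1) * (FF q c2 * FF q c3) := by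
  rw [Multipliable.tprod_mul (multF0 hq c1) ((multF hq c2).mul (multF hq c3)),
    Multipliable.tprod_mul (multF hq c2) (multF hq c3), tprod_shift hq c1]
  rfl

lemma tprod3' {q : ℂ} (hq : ‖q‖ < 1) (c1 c2 c3 : ℂ) :
    ∏' n : ℕ, ((1 + c1 * q ^ (n + 1)) * ((1 + c2 * q ^ (n + 1)) * (1 + c3 * q ^ (n + 1))))
      = FF q c1 * (FF q c2 * FF q c3) := by
  rw [Multipliable.tprod_mul (multF hq c1) ((multF hq c2).mul (multF hq c3)),
    Multipliable.tprod_mul (multF hq c2) (multF hq c3)]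
  rfl


lemma dblH_coe (τ : UpperHalfPlane) : ((dblH τ : UpperHalfPlane) : ℂ) = 2 * (τ : ℂ) := rfl

lemma ee_succ_nat (n : ℕ) (a : ℂ) : ee (((n : ℂ) + 1) * a) = ee a ^ (n + 1) := by
  rw [show ((n : ℂ) + 1) = ((n + 1 : ℕ) : ℂ) by push_cast; ring, ee_nat_mul]

lemma dedekindEta_eq (τ : UpperHalfPlane) :
    dedekindEta τ = ee ((τ : ℂ) / 24) * FF (ee (τ : ℂ)) (-1) := by
  rw [dedekindEta, FF]
  congr 1
  exact tprod_congr fun n => by rw [ee_succ_nat]; ring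

lemma th11_eq (τ : UpperHalfPlane) (u : ℂ) :
    th11 τ u = -(ee ((τ : ℂ) / 8) * ee (-u / 2)) *
      (((1 + -(ee u)) * FF (ee (τ : ℂ)) (-(ee u))) *
        (FF (ee (τ : ℂ)) (-(ee u)⁻¹) * FF (ee (τ : ℂ)) (-1))) := by
  have hq := norm_ee_lt_one τ
  rw [th11, ← tprod3 hq (-(ee u)) (-(ee u)⁻¹) (-1)]
  congr 1
  exact tprod_congr fun n => by rw [ee_succ_nat, ee_nat_mul, ee_neg]; ring

lemma th10_eq (τ : UpperHalfPlane) (u : ℂ) :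
    th10 τ u = ee ((τ : ℂ) / 8) * (ee (u / 2) + ee (-u / 2)) *
      (FF (ee (τ : ℂ)) (-1) * (FF (ee (τ : ℂ)) (ee u) * FF (ee (τ : ℂ)) ((ee u)⁻¹))) := by
  have hq := norm_ee_lt_one τ
  rw [th10, ← tprod3' hq (-1) (ee u) ((ee u)⁻¹)]
  congr 1
  exact tprod_congr fun n => by rw [ee_succ_nat, ee_neg]; ring

lemma th11_dbl_eq (τ : UpperHalfPlane) (u : ℂ) :
    th11 (dblH τ) (2 * u) = -(ee ((2 * (τ : ℂ)) / 8) * ee (-u)) *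
      (((1 + -(ee u ^ 2)) * FF (ee (τ : ℂ) ^ 2) (-(ee u ^ 2))) *
        (FF (ee (τ : ℂ) ^ 2) (-((ee u)⁻¹ ^ 2)) * FF (ee (τ : ℂ) ^ 2) (-1))) := by
  have hq2 := norm_sq_lt_one (norm_ee_lt_one τ)
  have h2 : ∀ a : ℂ, ee (2 * a) = ee a ^ 2 := fun a => by
    rw [show (2 : ℂ) = ((2 : ℕ) : ℂ) by norm_num, ee_nat_mul]
  rw [th11, dblH_coe, show -(2 * u) / 2 = -u by ring,
    ← tprod3 hq2 (-(ee u ^ 2)) (-((ee u)⁻¹ ^ 2)) (-1)]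
  congr 1
  refine tprod_congr fun n => ?_
  rw [show ((n : ℂ) + 1) * (2 * (τ : ℂ)) = 2 * (((n : ℂ) + 1) * (τ : ℂ)) by ring,
    show (n : ℂ) * (2 * (τ : ℂ)) = 2 * ((n : ℂ) * (τ : ℂ)) by ring,
    h2, h2, h2, ee_succ_nat, ee_nat_mul, ee_neg, h2, inv_pow]
  ring

lemma perj (τ : UpperHalfPlane) (u : ℂ) :
    th10 τ u * th11 τ u * FF (ee (τ : ℂ) ^ 2) (-1)
      = th11 (dblH τ) (2 * u) * FF (ee (τ : ℂ)) (-1) ^ 2 := by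
  have hq := norm_ee_lt_one τ
  rw [th10_eq, th11_eq, th11_dbl_eq, ← FF_sq hq (ee u), ← FF_sq hq ((ee u)⁻¹)]
  have h8 : ee ((2 * (τ : ℂ)) / 8) = ee ((τ : ℂ) / 8) * ee ((τ : ℂ) / 8) := by
    rw [← ee_add]; congr 1; ring
  have hs : ee u = ee (u / 2) * ee (u / 2) := by rw [← ee_add]; congr 1; ring
  have hns : ee (u / 2) ≠ 0 := ee_ne_zero _
  rw [h8, ee_neg u, show -u / 2 = -(u / 2) by ring, ee_neg (u / 2), hs]
  field_simp
  ring

lemma eta_id (τ : UpperHalfPlane) :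
    16 * dedekindEta τ ^ 12 * FF (ee (τ : ℂ) ^ 2) (-1) ^ 8
      = th10 τ 0 ^ 4 * FF (ee (τ : ℂ)) (-1) ^ 16 := by
  have hq := norm_ee_lt_one τ
  have hA : FF (ee (τ : ℂ) ^ 2) (-1) = FF (ee (τ : ℂ)) 1 * FF (ee (τ : ℂ)) (-1) := by
    have h := FF_sq hq 1
    simpa using h.symm
  have h24 : ee ((τ : ℂ) / 24) ^ 12 = ee ((τ : ℂ) / 8) ^ 4 := by
    rw [ee_pow, ee_pow]; congr 1; push_cast; ring
  rw [dedekindEta_eq, th10_eq, hA]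
  simp only [neg_zero, zero_div, ee_zero, inv_one]
  linear_combination (16 * FF (ee (τ : ℂ)) (-1) ^ 12 *
    (FF (ee (τ : ℂ)) 1 * FF (ee (τ : ℂ)) (-1)) ^ 8) * h24


/-- The Ramond character of the holomorphic SVOA `F₂₄` with `N = 1` structure
`𝔤 = A_{1,2}⁸`:
`16·η(τ)¹²·∏_{j=1}^{8} ϑ11(2τ,2z_j) = ϑ10(τ,0)⁴·∏_{j=1}^{8} (ϑ10(τ,z_j)ϑ11(τ,z_j))`;
equivalently, wherever `ϑ_𝔤(τ,z) = ∏_{j=1}^{8} ϑ11(τ,z_j) ≠ 0`,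
`χ_R(τ,z) = 2^{rk 𝔤/2}·ϑ_𝔤(2τ,2z)/ϑ_𝔤(τ,z) = η(τ)^{−12}·ϑ10(τ,0)⁴·∏_{j=1}^{8} ϑ10(τ,z_j)`. -/
theorem F24_Ramond_character_A1_level2_pow8 (τ : UpperHalfPlane) (z : Fin 8 → ℂ) :
    16 * dedekindEta τ ^ 12 * ∏ j, th11 (dblH τ) (2 * z j)
      = th10 τ 0 ^ 4 * ∏ j, (th10 τ (z j) * th11 τ (z j)) ∧
    ((∏ j, th11 τ (z j)) ≠ 0 →
      2 ^ 4 * (∏ j, th11 (dblH τ) (2 * z j)) / ∏ j, th11 τ (z j)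
        = (dedekindEta τ ^ 12)⁻¹ * th10 τ 0 ^ 4 * ∏ j, th10 τ (z j)) := by
  have hq := norm_ee_lt_one τ
  have hq2 := norm_sq_lt_one hq
  have hA : FF (ee (τ : ℂ) ^ 2) (-1) ≠ 0 := FF_neg_one_ne_zero hq2
  have hB : FF (ee (τ : ℂ)) (-1) ≠ 0 := FF_neg_one_ne_zero hq
  have h1 : 16 * dedekindEta τ ^ 12 * ∏ j, th11 (dblH τ) (2 * z j)
      = th10 τ 0 ^ 4 * ∏ j, (th10 τ (z j) * th11 τ (z j)) := by
    apply mul_right_cancel₀ (pow_ne_zero 8 hA)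
    calc (16 * dedekindEta τ ^ 12 * ∏ j, th11 (dblH τ) (2 * z j)) * FF (ee (τ : ℂ) ^ 2) (-1) ^ 8
        = (16 * dedekindEta τ ^ 12 * FF (ee (τ : ℂ) ^ 2) (-1) ^ 8) *
            ∏ j, th11 (dblH τ) (2 * z j) := by ring
      _ = (th10 τ 0 ^ 4 * FF (ee (τ : ℂ)) (-1) ^ 16) * ∏ j, th11 (dblH τ) (2 * z j) := by
            rw [eta_id]
      _ = th10 τ 0 ^ 4 * ∏ j, (th11 (dblH τ) (2 * z j) * FF (ee (τ : ℂ)) (-1) ^ 2) := by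
            rw [Finset.prod_mul_distrib, Finset.prod_const]
            simp only [Finset.card_univ, Fintype.card_fin]
            ring
      _ = th10 τ 0 ^ 4 * ∏ j, (th10 τ (z j) * th11 τ (z j) * FF (ee (τ : ℂ) ^ 2) (-1)) := by
            rw [Finset.prod_congr rfl fun j _ => (perj τ (z j)).symm]
      _ = (th10 τ 0 ^ 4 * ∏ j, (th10 τ (z j) * th11 τ (z j))) * FF (ee (τ : ℂ) ^ 2) (-1) ^ 8 := by
            rw [Finset.prod_mul_distrib, Finset.prod_const]
            simp only [Finset.card_univ, Fintype.card_fin]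
            ring
  refine ⟨h1, fun hne => ?_⟩
  have heta : dedekindEta τ ≠ 0 := by
    rw [dedekindEta_eq]; exact mul_ne_zero (ee_ne_zero _) hB
  have h2 : (∏ j, (th10 τ (z j) * th11 τ (z j)))
      = (∏ j, th10 τ (z j)) * ∏ j, th11 τ (z j) := Finset.prod_mul_distrib
  rw [h2] at h1
  field_simp
  linear_combination h1
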